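/- Let p, e, s : (0,∞)² → ℝ be C² functions of (ρ,θ) satisfying Gibbs' relations θ ∂s/∂θ = ∂e/∂θ and θ ∂s/∂ρ = ∂e/∂ρ − p/ρ², and the hypothesis of thermodynamic stability ∂p/∂ρ(ρ,θ) > 0 and ∂e/∂θ(ρ,θ) > 0 for all ρ, θ > 0. Let K ⊂ (0,∞)² be compact and let K̃ be a compact subset of the interior of K. Then there exists a constant C > 0, depending only on p, e, s, K, K̃, such that for every ε > 0, every (ρ,θ) ∈ K, every (ρ̃,θ̃) ∈ K̃, and every u, ũ ∈ ℝ³: E_ε(ρ,θ,u | ρ̃,θ̃,ũ) ≥ C ( |ρ−ρ̃|²/ε² + |θ−θ̃|²/ε² + |u−ũ|² ). -/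

import Mathlib

open Set

noncomputable def relEnergy (p e s : ℝ → ℝ → ℝ) (ε : ℝ)
    (ρ θ : ℝ) (u : EuclideanSpace ℝ (Fin 3))
    (ρt θt : ℝ) (ut : EuclideanSpace ℝ (Fin 3)) : ℝ :=
  1/2 * ρ * ‖u - ut‖^2
    + 1/ε^2 * (ρ * e ρ θ - θt * (ρ * s ρ θ - ρt * s ρt θt)
      - (e ρt θt - θt * s ρt θt + p ρt θt / ρt) * (ρ - ρt) - ρt * e ρt θt)

lemma keyA (f f' : ℝ → ℝ) {A B : ℝ} (c y : ℝ) (hy : y ∈ Icc A B)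
    (hf : ∀ t ∈ Icc A B, HasDerivAt f (f' t) t)
    (hsign : ∀ t ∈ Icc A B, c * (t - y)^2 ≤ f' t * (t - y)) :
    ∀ x ∈ Icc A B, c/2 * (x - y)^2 ≤ f x - f y := by
  intro x hx
  set φ : ℝ → ℝ := fun t => f t - c/2 * (t - y)^2 with hφ
  have hφd : ∀ t ∈ Icc A B, HasDerivAt φ (f' t - c * (t - y)) t := by
    intro t ht
    have h2 : HasDerivAt (fun t : ℝ => c/2 * (t - y)^2) (c * (t - y)) t := by
      have : HasDerivAt (fun t : ℝ => (t - y)^2) (2 * (t - y)) t := by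
        refine (((hasDerivAt_id t).sub_const y).pow 2).congr_deriv ?_; simp
      have := this.const_mul (c/2)
      refine this.congr_deriv ?_; ring
    exact (hf t ht).sub h2
  rcases le_total y x with h | h
  · have hsub : Icc y x ⊆ Icc A B := Icc_subset_Icc hy.1 hx.2
    have hmono : MonotoneOn φ (Icc y x) := by
      apply monotoneOn_of_deriv_nonneg (convex_Icc _ _)
      · exact fun t ht => ((hφd t (hsub ht)).continuousAt).continuousWithinAt
      · intro t ht
        rw [interior_Icc] at ht
        exact ((hφd t (hsub (Ioo_subset_Icc_self ht))).differentiableAt).differentiableWithinAt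
      · intro t ht
        rw [interior_Icc] at ht
        have htI := hsub (Ioo_subset_Icc_self ht)
        rw [(hφd t htI).deriv]
        have hpos : 0 < t - y := by linarith [ht.1]
        have := hsign t htI
        nlinarith
    have := hmono ⟨le_refl y, h⟩ ⟨h, le_refl x⟩ h
    simp only [hφ] at this
    nlinarith
  · have hsub : Icc x y ⊆ Icc A B := Icc_subset_Icc hx.1 hy.2
    have hmono : AntitoneOn φ (Icc x y) := by
      apply antitoneOn_of_deriv_nonpos (convex_Icc _ _)
      · exact fun t ht => ((hφd t (hsub ht)).continuousAt).continuousWithinAt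
      · intro t ht
        rw [interior_Icc] at ht
        exact ((hφd t (hsub (Ioo_subset_Icc_self ht))).differentiableAt).differentiableWithinAt
      · intro t ht
        rw [interior_Icc] at ht
        have htI := hsub (Ioo_subset_Icc_self ht)
        rw [(hφd t htI).deriv]
        have hneg : t - y < 0 := by linarith [ht.2]
        have := hsign t htI
        nlinarith
    have := hmono ⟨le_refl x, h⟩ ⟨h, le_refl y⟩ h
    simp only [hφ] at this
    nlinarith

/-- If `g' ≥ c` on an interval then `(g x - g y)(x - y) ≥ c (x-y)²`. -/

lemma keyB (g g' : ℝ → ℝ) {A B : ℝ} (c y : ℝ) (hy : y ∈ Icc A B)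
    (hg : ∀ t ∈ Icc A B, HasDerivAt g (g' t) t)
    (hc : ∀ t ∈ Icc A B, c ≤ g' t) :
    ∀ x ∈ Icc A B, c * (x - y)^2 ≤ (g x - g y) * (x - y) := by
  have hmono : MonotoneOn (fun t => g t - c * t) (Icc A B) := by
    apply monotoneOn_of_deriv_nonneg (convex_Icc _ _)
    · intro t ht
      exact (((hg t ht).sub ((hasDerivAt_id t).const_mul c)).continuousAt).continuousWithinAt
    · intro t ht
      have htI := interior_subset ht
      have := (hg t htI).sub ((hasDerivAt_id t).const_mul c)
      exact this.differentiableAt.differentiableWithinAt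
    · intro t ht
      have htI := interior_subset ht
      have hd : HasDerivAt (fun x => g x - c * x) (g' t - c) t := by
        exact ((hg t htI).sub ((hasDerivAt_id t).const_mul c)).congr_deriv (by simp)
      rw [hd.deriv]
      have := hc t htI
      linarith
  intro x hx
  rcases le_total y x with h | h
  · have h2 : g y - c * y ≤ g x - c * x := hmono hy hx h
    nlinarith
  · have h2 : g x - c * x ≤ g y - c * y := hmono hx hy h
    nlinarith

lemma hasDerivAt_fst' {F : ℝ → ℝ → ℝ}
    (hF : ContDiffOn ℝ 2 (fun q : ℝ × ℝ => F q.1 q.2) (Ioi (0:ℝ) ×ˢ Ioi (0:ℝ)))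
    {r t : ℝ} (hr : 0 < r) (ht : 0 < t) :
    HasDerivAt (fun a => F a t)
      (fderiv ℝ (fun q : ℝ × ℝ => F q.1 q.2) (r, t) (1, 0)) r := by
  have hUopen : IsOpen (Ioi (0:ℝ) ×ˢ Ioi (0:ℝ)) := isOpen_Ioi.prod isOpen_Ioi
  have hmem : ((r, t) : ℝ × ℝ) ∈ Ioi (0:ℝ) ×ˢ Ioi (0:ℝ) := ⟨hr, ht⟩
  have hdiff : DifferentiableAt ℝ (fun q : ℝ × ℝ => F q.1 q.2) (r, t) :=
    (hF.contDiffAt (hUopen.mem_nhds hmem)).differentiableAt (by norm_num)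
  have hline : HasDerivAt (fun a : ℝ => ((a, t) : ℝ × ℝ)) ((1:ℝ), (0:ℝ)) r :=
    (hasDerivAt_id r).prodMk (hasDerivAt_const r t)
  exact hdiff.hasFDerivAt.comp_hasDerivAt r hline

lemma hasDerivAt_snd' {F : ℝ → ℝ → ℝ}
    (hF : ContDiffOn ℝ 2 (fun q : ℝ × ℝ => F q.1 q.2) (Ioi (0:ℝ) ×ˢ Ioi (0:ℝ)))
    {r t : ℝ} (hr : 0 < r) (ht : 0 < t) :
    HasDerivAt (fun b => F r b)
      (fderiv ℝ (fun q : ℝ × ℝ => F q.1 q.2) (r, t) (0, 1)) t := by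
  have hUopen : IsOpen (Ioi (0:ℝ) ×ˢ Ioi (0:ℝ)) := isOpen_Ioi.prod isOpen_Ioi
  have hmem : ((r, t) : ℝ × ℝ) ∈ Ioi (0:ℝ) ×ˢ Ioi (0:ℝ) := ⟨hr, ht⟩
  have hdiff : DifferentiableAt ℝ (fun q : ℝ × ℝ => F q.1 q.2) (r, t) :=
    (hF.contDiffAt (hUopen.mem_nhds hmem)).differentiableAt (by norm_num)
  have hline : HasDerivAt (fun b : ℝ => ((r, b) : ℝ × ℝ)) ((0:ℝ), (1:ℝ)) t :=
    (hasDerivAt_const t r).prodMk (hasDerivAt_id t)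
  exact hdiff.hasFDerivAt.comp_hasDerivAt t hline

lemma contOn_partial {F : ℝ → ℝ → ℝ} (v : ℝ × ℝ)
    (hF : ContDiffOn ℝ 2 (fun q : ℝ × ℝ => F q.1 q.2) (Ioi (0:ℝ) ×ˢ Ioi (0:ℝ))) :
    ContinuousOn (fun q : ℝ × ℝ => fderiv ℝ (fun q : ℝ × ℝ => F q.1 q.2) q v)
      (Ioi (0:ℝ) ×ˢ Ioi (0:ℝ)) := by
  have hUopen : IsOpen (Ioi (0:ℝ) ×ˢ Ioi (0:ℝ)) := isOpen_Ioi.prod isOpen_Ioi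
  exact (hF.continuousOn_fderiv_of_isOpen hUopen (by norm_num)).clm_apply continuousOn_const

/-- coercivity of the relative energy in the essential range:
under Gibbs' relations and thermodynamic stability, for compact `K ⊂ (0,∞)²`
and compact `K̃ ⊂ int K`, there is `C > 0` such that
`E_ε(ρ,θ,u | ρ̃,θ̃,ũ) ≥ C(|ρ−ρ̃|²/ε² + |θ−θ̃|²/ε² + |u−ũ|²)`
for all `ε > 0`, `(ρ,θ) ∈ K`, `(ρ̃,θ̃) ∈ K̃`, `u, ũ ∈ ℝ³`. -/
theorem stmt_10 (p e s : ℝ → ℝ → ℝ)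
    (hp : ContDiffOn ℝ 2 (fun q : ℝ × ℝ => p q.1 q.2) (Ioi (0:ℝ) ×ˢ Ioi (0:ℝ)))
    (he : ContDiffOn ℝ 2 (fun q : ℝ × ℝ => e q.1 q.2) (Ioi (0:ℝ) ×ˢ Ioi (0:ℝ)))
    (hs : ContDiffOn ℝ 2 (fun q : ℝ × ℝ => s q.1 q.2) (Ioi (0:ℝ) ×ˢ Ioi (0:ℝ)))
    (hGibbs1 : ∀ ρ θ : ℝ, 0 < ρ → 0 < θ →
      θ * deriv (fun ϑ => s ρ ϑ) θ = deriv (fun ϑ => e ρ ϑ) θ)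
    (hGibbs2 : ∀ ρ θ : ℝ, 0 < ρ → 0 < θ →
      θ * deriv (fun ϱ => s ϱ θ) ρ = deriv (fun ϱ => e ϱ θ) ρ - p ρ θ / ρ^2)
    (hstab1 : ∀ ρ θ : ℝ, 0 < ρ → 0 < θ → 0 < deriv (fun a => p a θ) ρ)
    (hstab2 : ∀ ρ θ : ℝ, 0 < ρ → 0 < θ → 0 < deriv (fun b => e ρ b) θ)
    (K Kt : Set (ℝ × ℝ)) (hK : IsCompact K) (hKsub : K ⊆ Ioi (0:ℝ) ×ˢ Ioi (0:ℝ))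
    (hKt : IsCompact Kt) (hKtsub : Kt ⊆ interior K) :
    ∃ C : ℝ, 0 < C ∧ ∀ ε : ℝ, 0 < ε → ∀ ρθ ∈ K, ∀ ρθt ∈ Kt,
      ∀ u ut : EuclideanSpace ℝ (Fin 3),
        C * (|ρθ.1 - ρθt.1|^2 / ε^2 + |ρθ.2 - ρθt.2|^2 / ε^2 + ‖u - ut‖^2)
          ≤ relEnergy p e s ε ρθ.1 ρθ.2 u ρθt.1 ρθt.2 ut := by
  classical
  rcases K.eq_empty_or_nonempty with hKe | hKne
  · refine ⟨1, one_pos, ?_⟩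
    intro ε hε ρθ hρθ
    rw [hKe] at hρθ
    exact absurd hρθ (notMem_empty _)
  -- bounding box
  obtain ⟨qa, hqa, hamin⟩ := hK.exists_isMinOn hKne
    (continuous_fst.min continuous_snd).continuousOn
  obtain ⟨qb, hqb, hbmax⟩ := hK.exists_isMaxOn hKne
    (continuous_fst.max continuous_snd).continuousOn
  set a : ℝ := min qa.1 qa.2 with hadef
  set b : ℝ := max qb.1 qb.2 with hbdef
  have ha : 0 < a := lt_min (hKsub hqa).1 (hKsub hqa).2
  have hKbox : ∀ q ∈ K, q.1 ∈ Icc a b ∧ q.2 ∈ Icc a b := by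
    intro q hq
    have h1 : a ≤ min q.1 q.2 := isMinOn_iff.mp hamin q hq
    have h2 : max q.1 q.2 ≤ b := isMaxOn_iff.mp hbmax q hq
    exact ⟨⟨h1.trans (min_le_left _ _), (le_max_left _ _).trans h2⟩,
      ⟨h1.trans (min_le_right _ _), (le_max_right _ _).trans h2⟩⟩
  have hab : a ≤ b := by
    have := hKbox qa hqa
    exact (this.1.1).trans (this.1.2)
  -- the compact square Q
  set Q : Set (ℝ × ℝ) := Icc a b ×ˢ Icc a b with hQdef
  have hQcomp : IsCompact Q := isCompact_Icc.prod isCompact_Icc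
  have hQne : Q.Nonempty := ⟨(a, a), ⟨⟨le_refl a, hab⟩, ⟨le_refl a, hab⟩⟩⟩
  have hQsub : Q ⊆ Ioi (0:ℝ) ×ˢ Ioi (0:ℝ) := by
    rintro ⟨x, y⟩ ⟨hx, hy⟩
    exact ⟨lt_of_lt_of_le ha hx.1, lt_of_lt_of_le ha hy.1⟩
  -- partial derivative functions
  set pρ : ℝ × ℝ → ℝ :=
    fun q => fderiv ℝ (fun q : ℝ × ℝ => p q.1 q.2) q (1, 0) with hpρdef
  set eθ : ℝ × ℝ → ℝ :=
    fun q => fderiv ℝ (fun q : ℝ × ℝ => e q.1 q.2) q (0, 1) with heθdef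
  have hpρval : ∀ r t : ℝ, 0 < r → 0 < t → pρ (r, t) = deriv (fun a => p a t) r :=
    fun r t hr ht => ((hasDerivAt_fst' hp hr ht).deriv).symm
  have heθval : ∀ r t : ℝ, 0 < r → 0 < t → eθ (r, t) = deriv (fun b => e r b) t :=
    fun r t hr ht => ((hasDerivAt_snd' he hr ht).deriv).symm
  -- the two convexity constants
  obtain ⟨q1, hq1Q, hq1min⟩ := hQcomp.exists_isMinOn hQne
    (((contOn_partial (1,0) hp).mono hQsub).div continuousOn_fst
      (fun q hq => ne_of_gt (hQsub hq).1))
  obtain ⟨q2, hq2Q, hq2min⟩ := hQcomp.exists_isMinOn hQne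
    (((continuousOn_fst.mul ((contOn_partial (0,1) he).mono hQsub)).div continuousOn_snd
      (fun q hq => ne_of_gt (hQsub hq).2)))
  set c1 : ℝ := pρ q1 / q1.1 with hc1def
  set c2 : ℝ := q2.1 * eθ q2 / q2.2 with hc2def
  have hq1pos := hQsub hq1Q
  have hq2pos := hQsub hq2Q
  have hc1 : 0 < c1 := by
    have := hstab1 q1.1 q1.2 hq1pos.1 hq1pos.2
    rw [hc1def, hpρval q1.1 q1.2 hq1pos.1 hq1pos.2]
    exact div_pos this hq1pos.1
  have hc2 : 0 < c2 := by
    have := hstab2 q2.1 q2.2 hq2pos.1 hq2pos.2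
    rw [hc2def, heθval q2.1 q2.2 hq2pos.1 hq2pos.2]
    exact div_pos (mul_pos hq2pos.1 this) hq2pos.2
  have hc1min : ∀ q ∈ Q, c1 ≤ pρ q / q.1 := fun q hq => isMinOn_iff.mp hq1min q hq
  have hc2min : ∀ q ∈ Q, c2 ≤ q.1 * eθ q / q.2 := fun q hq => isMinOn_iff.mp hq2min q hq
  -- the constant
  refine ⟨min (min (c1/2) (c2/2)) (a/2), lt_min (lt_min (by linarith) (by linarith)) (by linarith), ?_⟩
  set C : ℝ := min (min (c1/2) (c2/2)) (a/2) with hCdef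
  intro ε hε ρθ hρθ ρθt hρθt u ut
  obtain ⟨ρ, θ⟩ := ρθ
  obtain ⟨ρt, θt⟩ := ρθt
  simp only at *
  have hρθtK : (ρt, θt) ∈ K := interior_subset (hKtsub hρθt)
  obtain ⟨hρI, hθI⟩ := hKbox _ hρθ
  obtain ⟨hρtI, hθtI⟩ := hKbox _ hρθtK
  simp only at hρI hθI hρtI hθtI
  have hposI : ∀ x : ℝ, x ∈ Icc a b → 0 < x := fun x hx => lt_of_lt_of_le ha hx.1
  have hρ0 : 0 < ρ := hposI _ hρI
  have hθ0 : 0 < θ := hposI _ hθI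
  have hρt0 : 0 < ρt := hposI _ hρtI
  have hθt0 : 0 < θt := hposI _ hθtI
  ---- θ-part
  set f : ℝ → ℝ := fun t => ρ * (e ρ t - θt * s ρ t) with hfdef
  have hθpart : c2/2 * (θ - θt)^2 ≤ f θ - f θt := by
    apply keyA f (fun t => ρ * eθ (ρ, t) / t * (t - θt)) c2 θt hθtI _ _ θ hθI
    · intro t htI
      have ht0 : 0 < t := hposI _ htI
      have hde : HasDerivAt (fun b => e ρ b) (eθ (ρ, t)) t := hasDerivAt_snd' he hρ0 ht0
      have hds : HasDerivAt (fun b => s ρ b)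
          (fderiv ℝ (fun q : ℝ × ℝ => s q.1 q.2) (ρ, t) (0, 1)) t := hasDerivAt_snd' hs hρ0 ht0
      have hD := ((hde.sub (hds.const_mul θt)).const_mul ρ)
      refine hD.congr_deriv ?_
      have hg1 := hGibbs1 ρ t hρ0 ht0
      rw [hde.deriv, hds.deriv] at hg1
      set sv := fderiv ℝ (fun q : ℝ × ℝ => s q.1 q.2) (ρ, t) (0, 1)
      have hsv : sv = eθ (ρ, t) / t := by
        field_simp
        linarith [hg1]
      rw [hsv]
      field_simp
    · intro t htI
      have ht0 : 0 < t := hposI _ htI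
      have hmem : ((ρ, t) : ℝ × ℝ) ∈ Q := ⟨hρI, htI⟩
      have := hc2min _ hmem
      simp only at this
      have h2 : ρ * eθ (ρ, t) / t * (t - θt) * (t - θt) = (ρ * eθ (ρ, t) / t) * (t - θt)^2 := by
        ring
      rw [h2]
      exact mul_le_mul_of_nonneg_right this (sq_nonneg _)
  ---- ρ-part
  set g : ℝ → ℝ := fun r => e r θt - θt * s r θt + p r θt / r with hgdef
  have hgderiv : ∀ t ∈ Icc a b, HasDerivAt g (pρ (t, θt) / t) t := by
    intro t htI
    have ht0 : 0 < t := hposI _ htI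
    have hde : HasDerivAt (fun a => e a θt)
        (fderiv ℝ (fun q : ℝ × ℝ => e q.1 q.2) (t, θt) (1, 0)) t := hasDerivAt_fst' he ht0 hθt0
    have hds : HasDerivAt (fun a => s a θt)
        (fderiv ℝ (fun q : ℝ × ℝ => s q.1 q.2) (t, θt) (1, 0)) t := hasDerivAt_fst' hs ht0 hθt0
    have hdp : HasDerivAt (fun a => p a θt) (pρ (t, θt)) t := hasDerivAt_fst' hp ht0 hθt0
    have hdq : HasDerivAt (fun a => p a θt / a)
        ((pρ (t, θt) * t - p t θt * 1) / t^2) t := hdp.div (hasDerivAt_id t) (ne_of_gt ht0)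
    have hD := (hde.sub (hds.const_mul θt)).add hdq
    refine hD.congr_deriv ?_
    have hg2 := hGibbs2 t θt ht0 hθt0
    rw [hde.deriv, hds.deriv] at hg2
    set ev := fderiv ℝ (fun q : ℝ × ℝ => e q.1 q.2) (t, θt) (1, 0)
    set sv := fderiv ℝ (fun q : ℝ × ℝ => s q.1 q.2) (t, θt) (1, 0)
    rw [show ev - θt * sv = p t θt / t^2 by linarith]
    field_simp
    ring
  have hBineq : ∀ x ∈ Icc a b, c1 * (x - ρt)^2 ≤ (g x - g ρt) * (x - ρt) := by
    apply keyB g (fun t => pρ (t, θt) / t) c1 ρt hρtI hgderiv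
    intro t htI
    exact hc1min _ ⟨htI, hθtI⟩
  set f2 : ℝ → ℝ := fun r => r * e r θt - θt * (r * s r θt) - g ρt * r with hf2def
  have hρpart : c1/2 * (ρ - ρt)^2 ≤ f2 ρ - f2 ρt := by
    apply keyA f2 (fun r => g r - g ρt) c1 ρt hρtI _ _ ρ hρI
    · intro t htI
      have ht0 : 0 < t := hposI _ htI
      have hde : HasDerivAt (fun a => e a θt)
          (fderiv ℝ (fun q : ℝ × ℝ => e q.1 q.2) (t, θt) (1, 0)) t := hasDerivAt_fst' he ht0 hθt0
      have hds : HasDerivAt (fun a => s a θt)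
          (fderiv ℝ (fun q : ℝ × ℝ => s q.1 q.2) (t, θt) (1, 0)) t := hasDerivAt_fst' hs ht0 hθt0
      have hD := (((hasDerivAt_id t).mul hde).sub
        (((hasDerivAt_id t).mul hds).const_mul θt)).sub ((hasDerivAt_id t).const_mul (g ρt))
      refine hD.congr_deriv ?_
      have hg2 := hGibbs2 t θt ht0 hθt0
      rw [hde.deriv, hds.deriv] at hg2
      set ev := fderiv ℝ (fun q : ℝ × ℝ => e q.1 q.2) (t, θt) (1, 0)
      set sv := fderiv ℝ (fun q : ℝ × ℝ => s q.1 q.2) (t, θt) (1, 0)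
      simp only [hgdef, id]
      rw [show ev = θt * sv + p t θt / t^2 by linarith]
      field_simp
      ring
    · intro t htI
      have h2 : (g t - g ρt) * (t - ρt) = (g t - g ρt) * (t - ρt) := rfl
      exact hBineq t htI
  ---- assembly
  have hbracket : (f θ - f θt) + (f2 ρ - f2 ρt)
      = ρ * e ρ θ - θt * (ρ * s ρ θ - ρt * s ρt θt)
        - (e ρt θt - θt * s ρt θt + p ρt θt / ρt) * (ρ - ρt) - ρt * e ρt θt := by
    simp only [hfdef, hf2def, hgdef]
    ring
  have hkin : a/2 * ‖u - ut‖^2 ≤ 1/2 * ρ * ‖u - ut‖^2 := by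
    have : a ≤ ρ := hρI.1
    nlinarith [norm_nonneg (u - ut), sq_nonneg ‖u - ut‖]
  have hε2 : 0 < ε^2 := by positivity
  have hCc1 : C ≤ c1/2 := le_trans (min_le_left _ _) (min_le_left _ _)
  have hCc2 : C ≤ c2/2 := le_trans (min_le_left _ _) (min_le_right _ _)
  have hCa : C ≤ a/2 := min_le_right _ _
  rw [relEnergy]
  rw [sq_abs, sq_abs]
  have hbr : c1/2 * (ρ - ρt)^2 + c2/2 * (θ - θt)^2
      ≤ ρ * e ρ θ - θt * (ρ * s ρ θ - ρt * s ρt θt)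
        - (e ρt θt - θt * s ρt θt + p ρt θt / ρt) * (ρ - ρt) - ρt * e ρt θt := by
    rw [← hbracket]; linarith
  have h1 : C * ((ρ - ρt)^2 / ε^2) ≤ c1/2 * ((ρ - ρt)^2 / ε^2) :=
    mul_le_mul_of_nonneg_right hCc1 (by positivity)
  have h2 : C * ((θ - θt)^2 / ε^2) ≤ c2/2 * ((θ - θt)^2 / ε^2) :=
    mul_le_mul_of_nonneg_right hCc2 (by positivity)
  have h3 : C * ‖u - ut‖^2 ≤ a/2 * ‖u - ut‖^2 :=
    mul_le_mul_of_nonneg_right hCa (sq_nonneg _)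
  have h4 : 1/ε^2 * (c1/2 * (ρ - ρt)^2 + c2/2 * (θ - θt)^2)
      ≤ 1/ε^2 * (ρ * e ρ θ - θt * (ρ * s ρ θ - ρt * s ρt θt)
        - (e ρt θt - θt * s ρt θt + p ρt θt / ρt) * (ρ - ρt) - ρt * e ρt θt) :=
    mul_le_mul_of_nonneg_left hbr (by positivity)
  have h5 : c1/2 * ((ρ - ρt)^2 / ε^2) + c2/2 * ((θ - θt)^2 / ε^2)
      = 1/ε^2 * (c1/2 * (ρ - ρt)^2 + c2/2 * (θ - θt)^2) := by
    ring
  linarith [h1, h2, h3, h4]
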